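/- Let m, n be reals with 0 < m and 3m < n, let Γ = {(2mi + mj, nj) : i, j ∈ ℤ}, and let t be a positive integer with n − 2mt > m and n − 2m(t+1) ≤ m. Let C = ⋃_{γ ∈ {id,−id,α,−α}} γ(⋃_{i=1}^{t} [m(i−1), mi] × [m(i−1), mi]), where α(x,y) = (−x,y). Then for every nonzero v ∈ Γ, the interior of C and the interior of C + v are disjoint. -/

import Mathlib

/-- The rhombic lattice `Γ = {(2mi + mj, nj) : i, j ∈ ℤ}` as a subset of `ℝ²`. -/
def rhombicLattice (m n : ℝ) : Set (ℝ × ℝ) :=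
  {p | ∃ i j : ℤ, p = (2 * m * (i : ℝ) + m * (j : ℝ), n * (j : ℝ))}

/-- The reflection `α(x,y) = (−x,y)`. -/
def alphaMap : ℝ × ℝ → ℝ × ℝ := fun p => (-p.1, p.2)

/-- The staircase of squares `[m(i−1), mi] × [m(i−1), mi]`, `i = 1, …, t`,
together with its images under the point group `{id, −id, α, −α}`. -/
def staircase (m : ℝ) (t : ℕ) : Set (ℝ × ℝ) :=
  ⋃ γ ∈ ({fun p => p, fun p => -p, alphaMap, fun p => -(alphaMap p)} :
      Set (ℝ × ℝ → ℝ × ℝ)),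
    γ '' (⋃ i ∈ Finset.Icc 1 t,
      Set.Icc (m * ((i : ℝ) - 1)) (m * (i : ℝ)) ×ˢ
        Set.Icc (m * ((i : ℝ) - 1)) (m * (i : ℝ)))


lemma mem_staircase_elim {m : ℝ} {t : ℕ} {q : ℝ × ℝ} (hq : q ∈ staircase m t) :
    ∃ k : ℕ, 1 ≤ k ∧ k ≤ t ∧ ∃ e1 e2 : ℝ, (e1 = 1 ∨ e1 = -1) ∧ (e2 = 1 ∨ e2 = -1) ∧
      m * ((k : ℝ) - 1) ≤ e1 * q.1 ∧ e1 * q.1 ≤ m * k ∧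
      m * ((k : ℝ) - 1) ≤ e2 * q.2 ∧ e2 * q.2 ≤ m * k := by
  simp only [staircase, Set.mem_iUnion, Set.mem_image, Set.mem_insert_iff,
    Set.mem_singleton_iff, Finset.mem_Icc, Set.mem_prod, Set.mem_Icc, exists_prop] at hq
  obtain ⟨γ, hγ, r, ⟨k, ⟨hk1, hk2⟩, ⟨hx1, hx2⟩, hy1, hy2⟩, hrq⟩ := hq
  refine ⟨k, hk1, hk2, ?_⟩
  rcases hγ with h | h | h | h <;> subst h <;> simp only [alphaMap] at hrq
  · exact ⟨1, 1, Or.inl rfl, Or.inl rfl, by subst hrq; simpa using ⟨hx1, hx2, hy1, hy2⟩⟩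
  · refine ⟨-1, -1, Or.inr rfl, Or.inr rfl, ?_⟩
    have h1 : q.1 = -r.1 := by rw [← hrq]; rfl
    have h2 : q.2 = -r.2 := by rw [← hrq]; rfl
    rw [h1, h2]; constructor; linarith; constructor; linarith; constructor <;> linarith
  · refine ⟨-1, 1, Or.inr rfl, Or.inl rfl, ?_⟩
    have h1 : q.1 = -r.1 := by rw [← hrq]
    have h2 : q.2 = r.2 := by rw [← hrq]
    rw [h1, h2]; constructor; linarith; constructor; linarith; constructor <;> linarith
  · refine ⟨1, -1, Or.inl rfl, Or.inr rfl, ?_⟩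
    have h1 : q.1 = r.1 := by rw [← hrq]; simp
    have h2 : q.2 = -r.2 := by rw [← hrq]; rfl
    rw [h1, h2]; constructor; linarith; constructor; linarith; constructor <;> linarith

lemma floor_between {m : ℝ} (hm : 0 < m) (c : ℤ) {x : ℝ}
    (h1 : m * (c : ℝ) ≤ x) (h2 : x ≤ m * ((c : ℝ) + 1)) (hx : x ≠ m * ⌊x / m⌋) :
    ⌊x / m⌋ = c := by
  have hle : (c : ℝ) ≤ x / m := (le_div_iff₀ hm).mpr (by linarith)
  have hle2 : x / m ≤ (c : ℝ) + 1 := (div_le_iff₀ hm).mpr (by linarith)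
  have hlt : x / m < (c : ℝ) + 1 := by
    rcases lt_or_eq_of_le hle2 with h | h
    · exact h
    · exfalso
      apply hx
      have hfl : ⌊x / m⌋ = c + 1 := by
        rw [h, show (c : ℝ) + 1 = ((c + 1 : ℤ) : ℝ) by push_cast; ring, Int.floor_intCast]
      rw [hfl]
      push_cast
      field_simp at h
      linarith [h]
  exact Int.floor_eq_iff.mpr ⟨hle, by push_cast; exact hlt⟩

lemma floor_max_eq {m : ℝ} (hm : 0 < m) {x e : ℝ} {k : ℕ} (hk : 1 ≤ k)
    (he : e = 1 ∨ e = -1) (h1 : m * ((k : ℝ) - 1) ≤ e * x) (h2 : e * x ≤ m * k)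
    (hx : x ≠ m * ⌊x / m⌋) :
    max (⌊x / m⌋ + 1) (-⌊x / m⌋) = (k : ℤ) := by
  rcases he with rfl | rfl
  · rw [one_mul] at h1 h2
    have := floor_between hm ((k : ℤ) - 1) (by push_cast; linarith) (by push_cast; linarith) hx
    rw [this]
    have : (1 : ℤ) ≤ (k : ℤ) := by exact_mod_cast hk
    omega
  · have h1' : m * (-(k : ℝ)) ≤ x := by linarith
    have h2' : x ≤ m * (-(k : ℝ) + 1) := by linarith
    have := floor_between hm (-(k : ℤ)) (by push_cast; linarith) (by push_cast; linarith) hx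
    rw [this]
    have : (1 : ℤ) ≤ (k : ℤ) := by exact_mod_cast hk
    omega

lemma mem_staircase_floor {m : ℝ} (hm : 0 < m) {t : ℕ} {q : ℝ × ℝ}
    (hq : q ∈ staircase m t) (hx : q.1 ≠ m * ⌊q.1 / m⌋) (hy : q.2 ≠ m * ⌊q.2 / m⌋) :
    max (⌊q.1 / m⌋ + 1) (-⌊q.1 / m⌋) = max (⌊q.2 / m⌋ + 1) (-⌊q.2 / m⌋) ∧
      max (⌊q.2 / m⌋ + 1) (-⌊q.2 / m⌋) ≤ (t : ℤ) := by
  obtain ⟨k, hk1, hk2, e1, e2, he1, he2, ha1, ha2, hb1, hb2⟩ := mem_staircase_elim hq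
  have H1 := floor_max_eq hm hk1 he1 ha1 ha2 hx
  have H2 := floor_max_eq hm hk1 he2 hb1 hb2 hy
  rw [H1, H2]
  exact ⟨rfl, by exact_mod_cast hk2⟩

lemma mem_staircase_ybound {m : ℝ} (hm : 0 < m) {t : ℕ} {q : ℝ × ℝ}
    (hq : q ∈ staircase m t) : |q.2| ≤ m * t := by
  obtain ⟨k, hk1, hk2, e1, e2, he1, he2, ha1, ha2, hb1, hb2⟩ := mem_staircase_elim hq
  have hkt : (k : ℝ) ≤ t := by exact_mod_cast hk2
  have hk1' : (1 : ℝ) ≤ k := by exact_mod_cast hk1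
  have hmk : m * (k : ℝ) ≤ m * t := by nlinarith
  rcases he2 with rfl | rfl <;> rw [abs_le] <;> constructor <;> nlinarith

lemma exists_nonmult {m : ℝ} (hm : 0 < m) (z ε : ℝ) (hε : 0 < ε) :
    ∃ x : ℝ, |x - z| < ε ∧ x ≠ m * ⌊x / m⌋ := by
  set δ : ℝ := min (ε / 2) (m / 2) with hδdef
  have hδ : 0 < δ := lt_min (by linarith) (by linarith)
  have hδε : δ < ε := lt_of_le_of_lt (min_le_left _ _) (by linarith)
  have hδm : δ ≤ m / 2 := min_le_right _ _
  by_cases h : z + δ = m * ⌊(z + δ) / m⌋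
  · refine ⟨z + δ / 2, by rw [show z + δ / 2 - z = δ / 2 by ring, abs_of_pos (by linarith)]; linarith, ?_⟩
    intro h2
    set c1 := ⌊(z + δ) / m⌋
    set c2 := ⌊(z + δ / 2) / m⌋
    have hdiff : m * ((c1 : ℝ) - c2) = δ / 2 := by
      have := h
      have := h2
      push_cast
      nlinarith [h, h2]
    have h0 : (0 : ℝ) < (c1 : ℝ) - c2 := by nlinarith
    have h1 : ((c1 : ℝ) - c2) < 1 := by nlinarith
    have : (0 : ℤ) < c1 - c2 := by exact_mod_cast (by push_cast; linarith : (0:ℝ) < ((c1 - c2 : ℤ) : ℝ))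
    have : (c1 - c2 : ℤ) < 1 := by exact_mod_cast (by push_cast; linarith : ((c1 - c2 : ℤ) : ℝ) < 1)
    omega
  · exact ⟨z + δ, by rw [show z + δ - z = δ by ring, abs_of_pos hδ]; linarith, h⟩

/-- For `0 < m`, `3m < n`, and `t` the largest positive integer with
`n − 2mt > m`, the set `C = staircase m t` has interior disjoint from the interior of each
of its translates by nonzero lattice vectors. -/
theorem stmt_17 (m n : ℝ) (hm : 0 < m) (hn : 3 * m < n) (t : ℕ) (ht : 0 < t)
    (ht1 : m < n - 2 * m * (t : ℝ)) (ht2 : n - 2 * m * ((t : ℝ) + 1) ≤ m) :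
    ∀ v ∈ rhombicLattice m n, v ≠ 0 →
      interior (staircase m t) ∩ interior ((fun p => p + v) '' staircase m t) = ∅ := by
  intro v hv hv0
  obtain ⟨i, j, rfl⟩ := hv
  rw [Set.eq_empty_iff_forall_notMem]
  intro p hp
  obtain ⟨hp1, hp2⟩ := hp
  by_cases hj : j = 0
  · -- horizontal translation
    subst hj
    have hi : i ≠ 0 := by
      rintro rfl
      exact hv0 (by norm_num [Prod.ext_iff])
    have hopen : IsOpen (interior (staircase m t) ∩
        interior ((fun p => p + ((2 * m * (i : ℝ) + m * ((0 : ℤ) : ℝ), n * ((0 : ℤ) : ℝ)) : ℝ × ℝ)) '' staircase m t)) :=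
      isOpen_interior.inter isOpen_interior
    obtain ⟨ε, hε, hball⟩ := Metric.isOpen_iff.mp hopen p ⟨hp1, hp2⟩
    obtain ⟨x, hx1, hx2⟩ := exists_nonmult hm p.1 ε hε
    obtain ⟨y, hy1, hy2⟩ := exists_nonmult hm p.2 ε hε
    have hq : (x, y) ∈ Metric.ball p ε := by
      rw [Metric.mem_ball, Prod.dist_eq]
      exact max_lt (by rwa [Real.dist_eq]) (by rwa [Real.dist_eq])
    have hmem := hball hq
    have hqC : (x, y) ∈ staircase m t := interior_subset hmem.1
    obtain ⟨r, hr, hrq⟩ := interior_subset hmem.2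
    simp only at hrq
    have hr1 : r.1 = x - m * (2 * (i : ℤ) : ℤ) := by
      have := congrArg Prod.fst hrq
      simp at this
      push_cast
      linarith
    have hr2 : r.2 = y := by
      have := congrArg Prod.snd hrq
      simp at this
      linarith
    have hdiv : r.1 / m = x / m - ((2 * i : ℤ) : ℝ) := by
      rw [hr1]; field_simp
    have hfl : ⌊r.1 / m⌋ = ⌊x / m⌋ - 2 * i := by
      rw [hdiv, Int.floor_sub_intCast]
    have hrx : r.1 ≠ m * ⌊r.1 / m⌋ := by
      intro h
      apply hx2
      rw [hfl] at h
      rw [hr1] at h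
      push_cast at h ⊢
      linarith
    have hry : r.2 ≠ m * ⌊r.2 / m⌋ := by rw [hr2]; exact hy2
    have H1 := mem_staircase_floor hm hqC hx2 hy2
    have H2 := mem_staircase_floor hm hr hrx hry
    rw [hr2] at H2
    rw [hfl] at H2
    simp only at H1 H2
    omega
  · -- vertical translation
    have hpC : p ∈ staircase m t := interior_subset hp1
    obtain ⟨r, hr, hrp⟩ := interior_subset hp2
    simp only at hrp
    have hb1 := mem_staircase_ybound hm hpC
    have hb2 := mem_staircase_ybound hm hr
    have hr2 : p.2 = r.2 + n * (j : ℝ) := by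
      have := congrArg Prod.snd hrp
      simp at this
      linarith
    have hjabs : (1 : ℝ) ≤ |(j : ℝ)| := by
      have : (1 : ℤ) ≤ |j| := Int.one_le_abs (by omega)
      exact_mod_cast (by exact_mod_cast this : (1 : ℝ) ≤ ((|j| : ℤ) : ℝ))
    have hn0 : 0 < n := by linarith
    have habs : n ≤ |n * (j : ℝ)| := by
      rw [abs_mul, abs_of_pos hn0]
      nlinarith
    have hle : |n * (j : ℝ)| ≤ 2 * m * t := by
      rw [abs_le] at hb1 hb2 ⊢
      constructor <;> nlinarith [hb1.1, hb1.2, hb2.1, hb2.2]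
    linarith
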